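/- Let N ≥ 4 be an even integer and Δ, μ > 0 be reals with Δμ > ∑_{k=N/2+1}^{N} 1/k. Define f : ℕ → ℝ by f(B) = NΔ/B + (1/μ) H_{B,1}. Then for every positive divisor B of N with B ≠ N, f(N) < f(B). In particular, among the feasible redundancy levels (positive divisors of N), the average job compute time is minimized uniquely at B = N, i.e., at full parallelism. -/

import Mathlib

open Finset

private lemma g_mono_step (n : ℕ) (hn : 1 ≤ n) :
    ∑ k ∈ Finset.Ico n (2*n), (1:ℝ)/(k+1)
      ≤ ∑ k ∈ Finset.Ico (n+1) (2*(n+1)), (1:ℝ)/(k+1) := by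
  have h1 : (2*(n+1)) = (2*n+1)+1 := by ring
  rw [h1, Finset.sum_Ico_succ_top (by omega), Finset.sum_Ico_succ_top (by omega),
    Finset.sum_eq_sum_Ico_succ_bot (show n < 2*n by omega)]
  have hn' : (1:ℝ) ≤ (n:ℝ) := by exact_mod_cast hn
  have h2 : (1:ℝ)/(n+1) ≤ 1/((2*n:ℕ)+1) + 1/((2*n+1:ℕ)+1) := by
    push_cast
    rw [div_add_div _ _ (by positivity) (by positivity),
      div_le_div_iff₀ (by positivity) (by positivity)]
    nlinarith
  linarith

private lemma g_mono {a b : ℕ} (ha : 1 ≤ a) (hab : a ≤ b) :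
    ∑ k ∈ Finset.Ico a (2*a), (1:ℝ)/(k+1)
      ≤ ∑ k ∈ Finset.Ico b (2*b), (1:ℝ)/(k+1) := by
  induction b, hab using Nat.le_induction with
  | base => exact le_refl _
  | succ n hn ih => exact ih.trans (g_mono_step n (ha.trans hn))

private lemma g_lower {n : ℕ} (hn : 2 ≤ n) :
    (1:ℝ)/2 < ∑ k ∈ Finset.Ico n (2*n), (1:ℝ)/(k+1) := by
  have h1 : ∑ _k ∈ Finset.Ico n (2*n), (1:ℝ)/(2*n)
      < ∑ k ∈ Finset.Ico n (2*n), (1:ℝ)/(k+1) := by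
    apply Finset.sum_lt_sum
    · intro k hk
      simp only [Finset.mem_Ico] at hk
      apply one_div_le_one_div_of_le (by positivity)
      have : (k:ℝ)+1 ≤ (2*n:ℕ) := by exact_mod_cast hk.2
      push_cast at this ⊢; linarith
    · refine ⟨n, by simp [Finset.mem_Ico]; omega, ?_⟩
      apply one_div_lt_one_div_of_lt (by positivity)
      have : (n:ℕ)+1 < 2*n := by omega
      have := (Nat.cast_lt (α := ℝ)).mpr this
      push_cast at this ⊢; linarith
  have h2 : ∑ _k ∈ Finset.Ico n (2*n), (1:ℝ)/(2*n) = 1/2 := by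
    rw [Finset.sum_const, Nat.card_Ico]
    have hn0 : (0:ℝ) < n := by positivity
    have : (2*n - n : ℕ) = n := by omega
    rw [this, nsmul_eq_mul]
    field_simp
  linarith [h2 ▸ h1]

/-- Tail block bound: for `j ≥ 2`, the block sum is at most `1/2`. -/
private lemma block_bound {B j : ℕ} (hB : 1 ≤ B) (hj : 2 ≤ j) :
    ∑ k ∈ Finset.Ico (j*B) ((j+1)*B), (1:ℝ)/(k+1) ≤ 1/2 := by
  have hcard : (Finset.Ico (j*B) ((j+1)*B)).card = B := by
    rw [Nat.card_Ico, add_mul, one_mul, Nat.add_sub_cancel_left]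
  have h1 : ∑ k ∈ Finset.Ico (j*B) ((j+1)*B), (1:ℝ)/(k+1)
      ≤ (Finset.Ico (j*B) ((j+1)*B)).card • ((1:ℝ)/(j*B)) := by
    apply Finset.sum_le_card_nsmul
    intro k hk
    simp only [Finset.mem_Ico] at hk
    apply one_div_le_one_div_of_le
    · have : 0 < j*B := by positivity
      exact_mod_cast this
    · have : (j*B:ℕ) ≤ (k:ℝ) := by exact_mod_cast hk.1
      push_cast at this ⊢; linarith
  rw [hcard, nsmul_eq_mul] at h1
  have hBpos : (0:ℝ) < B := by exact_mod_cast hB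
  have hj2 : (2:ℝ) ≤ j := by exact_mod_cast hj
  have h2 : (B:ℝ) * (1/((j:ℝ)*B)) ≤ 1/2 := by
    rw [mul_one_div, div_le_div_iff₀ (by positivity) (by norm_num)]
    nlinarith
  push_cast at h1
  linarith

theorem full_parallelism_optimal_shifted_exponential
    (N : ℕ) (hN : 4 ≤ N) (hNeven : Even N) (Δ μ : ℝ) (hΔ : 0 < Δ) (hμ : 0 < μ)
    (h : ∑ k ∈ Finset.Icc (N / 2 + 1) N, (1 : ℝ) / (k : ℝ) < Δ * μ)
    (B : ℕ) (hB : 0 < B) (hBdvd : B ∣ N) (hBne : B ≠ N) :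
    (N : ℝ) * Δ / (N : ℝ) + (1 / μ) * ∑ k ∈ Finset.range N, (1 : ℝ) / (k + 1)
      < (N : ℝ) * Δ / (B : ℝ) + (1 / μ) * ∑ k ∈ Finset.range B, (1 : ℝ) / (k + 1) := by
  obtain ⟨m, hNm⟩ := hBdvd
  have hm2 : 2 ≤ m := by
    rcases Nat.lt_or_ge m 2 with hm | hm
    · interval_cases m <;> omega
    · exact hm
  have hn2 : 2 * (N/2) = N := Nat.two_mul_div_two_of_even hNeven
  have h2B : 2 * B ≤ N := by
    rw [hNm, mul_comm 2 B]
    exact Nat.mul_le_mul_left B hm2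
  -- rewrite hypothesis sum as g (N/2)
  have hS : ∑ k ∈ Finset.Icc (N / 2 + 1) N, (1 : ℝ) / (k : ℝ)
      = ∑ k ∈ Finset.Ico (N/2) (2*(N/2)), (1:ℝ)/(k+1) := by
    rw [show Finset.Icc (N/2+1) N = Finset.Ico (N/2+1) (N+1) by
      rw [Finset.Ico_add_one_right_eq_Icc]]
    rw [Finset.sum_Ico_eq_sum_range, Finset.sum_Ico_eq_sum_range]
    have : N + 1 - (N/2 + 1) = 2*(N/2) - N/2 := by omega
    rw [this]
    apply Finset.sum_congr rfl
    intro i _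
    push_cast
    ring_nf
  rw [hS] at h
  have hgB : ∑ k ∈ Finset.Ico B (2*B), (1:ℝ)/(k+1) < Δ * μ := by
    refine lt_of_le_of_lt (g_mono hB ?_) h
    omega
  have hhalf : (1:ℝ)/2 < Δ * μ := lt_of_lt_of_le (g_lower (by omega)) (le_of_lt h)
  -- tail sum bound by induction on number of blocks
  have key : ∀ j : ℕ, 2 ≤ j → ∑ k ∈ Finset.Ico B (j*B), (1:ℝ)/(k+1)
      < ((j:ℝ) - 1) * (Δ * μ) := by
    intro j hj
    induction j, hj using Nat.le_induction with
    | base =>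
      rw [show ((2:ℕ):ℝ) - 1 = 1 by norm_num, one_mul]
      exact hgB
    | succ n hn ih =>
      rw [← Finset.sum_Ico_consecutive _ (show B ≤ n*B by nlinarith)
        (show n*B ≤ (n+1)*B by nlinarith)]
      have hb := block_bound hB hn
      have : ((n:ℝ)+1-1) = ((n:ℝ)-1) + 1 := by ring
      push_cast
      linarith
  have hT := key m hm2
  -- split H_N = H_B + tail
  have hsplit : ∑ k ∈ Finset.range N, (1:ℝ)/(k+1)
      = ∑ k ∈ Finset.range B, (1:ℝ)/(k+1) + ∑ k ∈ Finset.Ico B (m*B), (1:ℝ)/(k+1) := by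
    rw [Finset.range_eq_Ico, Finset.range_eq_Ico,
      show m*B = N by rw [hNm, Nat.mul_comm]]
    exact (Finset.sum_Ico_consecutive _ (Nat.zero_le B) (by omega : B ≤ N)).symm
  rw [hsplit]
  have hNpos : (0:ℝ) < N := by positivity
  have hBpos : (0:ℝ) < B := by exact_mod_cast hB
  have hNcast : (N:ℝ) = B * m := by exact_mod_cast hNm
  have e1 : (N:ℝ) * Δ / N = Δ := by field_simp
  have e2 : (N:ℝ) * Δ / B = m * Δ := by rw [hNcast]; field_simp
  rw [e1, e2]
  have hm2' : (2:ℝ) ≤ m := by exact_mod_cast hm2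
  have hmuinv : (0:ℝ) < 1/μ := by positivity
  have h3 : (1/μ) * ∑ k ∈ Finset.Ico B (m*B), (1:ℝ)/(k+1) < (1/μ) * (((m:ℝ)-1) * (Δ*μ)) :=
    mul_lt_mul_of_pos_left hT hmuinv
  have h4 : (1/μ) * (((m:ℝ)-1) * (Δ*μ)) = ((m:ℝ)-1) * Δ := by
    field_simp
  rw [h4] at h3
  nlinarith [h3]
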